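/- Let K ⊆ [0,1] and K' ⊆ [0,s₀] be attractors of iterated function systems {f_a}_{a∈𝒜} and {f'_{a'}}_{a'∈𝒜'} of contracting similarities with the same ratio ρ ∈ (0,1), each with con(K)=[0,1] and con(K')=[0,s₀]. For u ∈ ℝ (representing a relative configuration) define the renormalization operators T_a T'_{a'}(u) as the relative position of f_a applied to K and f'_{a'} applied to K'+u, rescaled by ρ^{-1}. Then u ∈ K − K' if and only if there exists M > 0 and sequences a_i ∈ 𝒜, a'_i ∈ 𝒜' such that the iterates u₀ = u, u_i = T_{a_i} T'_{a'_i}(u_{i−1}) satisfy |u_i| < M for all i ≥ 0. -/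

import Mathlib

open Filter Finset

/-- Renormalization operator on relative configurations:
`T_a T'_{a'}(u) = ρ⁻¹ (u + e' a' - e a)` where `e a` (resp. `e' a'`) is the translation
part of the similarity `f_a x = ρ x + e a` (resp. `f'_{a'} x = ρ x + e' a'`). -/
noncomputable def renorm (ρ : ℝ) {𝒜 𝒜' : Type*} (e : 𝒜 → ℝ) (e' : 𝒜' → ℝ)
    (a : 𝒜) (a' : 𝒜') (u : ℝ) : ℝ :=
  ρ⁻¹ * (u + e' a' - e a)

lemma attractor_aux {𝒜 : Type*} [Finite 𝒜] (ρ : ℝ) (hρ : 0 < ρ) (hρ1 : ρ < 1)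
    (e : 𝒜 → ℝ) (K : Set ℝ) (hKc : IsCompact K)
    (hK : K = ⋃ a : 𝒜, (fun x => ρ * x + e a) '' K) (h0 : (0 : ℝ) ∈ K) (b : ℕ → 𝒜) :
    Summable (fun i => ρ ^ i * e (b i)) ∧ (∑' i, ρ ^ i * e (b i)) ∈ K := by
  obtain ⟨C, hC⟩ := Finite.exists_le (fun a : 𝒜 => |e a|)
  have hsum : Summable (fun i => ρ ^ i * e (b i)) := by
    apply Summable.of_norm_bounded
      ((summable_geometric_of_lt_one hρ.le hρ1).mul_left C)
    intro i
    rw [Real.norm_eq_abs, abs_mul, abs_pow, abs_of_pos hρ, mul_comm]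
    exact mul_le_mul_of_nonneg_right (hC (b i)) (pow_nonneg hρ.le i)
  have key : ∀ (a : 𝒜) (x : ℝ), x ∈ K → ρ * x + e a ∈ K := by
    intro a x hx
    rw [hK]
    exact Set.mem_iUnion.2 ⟨a, ⟨x, hx, rfl⟩⟩
  have hpartial : ∀ (c : ℕ → 𝒜) (n : ℕ), (∑ i ∈ Finset.range n, ρ ^ i * e (c i)) ∈ K := by
    intro c n
    induction n generalizing c with
    | zero => simpa using h0
    | succ n ih =>
      rw [Finset.sum_range_succ']
      have h2 : (∑ i ∈ Finset.range n, ρ ^ (i + 1) * e (c (i + 1))) + ρ ^ 0 * e (c 0)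
          = ρ * (∑ i ∈ Finset.range n, ρ ^ i * e (c (i + 1))) + e (c 0) := by
        rw [Finset.mul_sum]
        simp only [pow_zero, one_mul]
        congr 1
        exact Finset.sum_congr rfl (fun i _ => by ring)
      rw [h2]
      exact key (c 0) _ (ih (fun i => c (i + 1)))
  refine ⟨hsum, ?_⟩
  exact hKc.isClosed.mem_of_tendsto hsum.hasSum.tendsto_sum_nat
    (Filter.Eventually.of_forall (hpartial b))

theorem stmt_9 {𝒜 𝒜' : Type*} [Finite 𝒜] [Finite 𝒜'] [Nonempty 𝒜] [Nonempty 𝒜']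
    (ρ : ℝ) (hρ : 0 < ρ) (hρ1 : ρ < 1) (s₀ : ℝ) (hs₀ : 0 < s₀)
    (e : 𝒜 → ℝ) (e' : 𝒜' → ℝ) (K K' : Set ℝ)
    (hKc : IsCompact K) (hK'c : IsCompact K')
    -- K, K' are the attractors of the IFSs {x ↦ ρ x + e a}, {x ↦ ρ x + e' a'}
    (hK : K = ⋃ a : 𝒜, (fun x => ρ * x + e a) '' K)
    (hK' : K' = ⋃ a' : 𝒜', (fun x => ρ * x + e' a') '' K')
    -- con(K) = [0,1], con(K') = [0,s₀]
    (hKsub : K ⊆ Set.Icc 0 1) (h0K : (0 : ℝ) ∈ K) (h1K : (1 : ℝ) ∈ K)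
    (hK'sub : K' ⊆ Set.Icc 0 s₀) (h0K' : (0 : ℝ) ∈ K') (hsK' : s₀ ∈ K')
    -- the images of the convex hulls are pairwise disjoint
    (hdisj : Pairwise (fun a b : 𝒜 =>
      Disjoint ((fun x => ρ * x + e a) '' Set.Icc 0 1) ((fun x => ρ * x + e b) '' Set.Icc 0 1)))
    (hdisj' : Pairwise (fun a' b' : 𝒜' =>
      Disjoint ((fun x => ρ * x + e' a') '' Set.Icc 0 s₀)
        ((fun x => ρ * x + e' b') '' Set.Icc 0 s₀)))
    (u : ℝ) :
    u ∈ Set.image2 (· - ·) K K' ↔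
      ∃ M > (0 : ℝ), ∃ (a : ℕ → 𝒜) (a' : ℕ → 𝒜') (v : ℕ → ℝ),
        v 0 = u ∧ (∀ i, v (i + 1) = renorm ρ e e' (a (i + 1)) (a' (i + 1)) (v i)) ∧
          ∀ i, |v i| < M := by
  constructor
  · rintro ⟨x, hx, y, hy, rfl⟩
    -- decomposition step functions
    have step : ∀ x ∈ K, ∃ a : 𝒜, ∃ z ∈ K, x = ρ * z + e a := by
      intro x hx
      rw [hK] at hx
      rcases Set.mem_iUnion.1 hx with ⟨a, z, hz, hzx⟩
      exact ⟨a, z, hz, hzx.symm⟩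
    have step' : ∀ y ∈ K', ∃ a' : 𝒜', ∃ z ∈ K', y = ρ * z + e' a' := by
      intro y hy
      rw [hK'] at hy
      rcases Set.mem_iUnion.1 hy with ⟨a, z, hz, hzy⟩
      exact ⟨a, z, hz, hzy.symm⟩
    choose A Z hZ hEq using step
    choose A' Z' hZ' hEq' using step'
    -- the sequence of pairs of points
    let S : ℕ → {p : ℝ × ℝ // p.1 ∈ K ∧ p.2 ∈ K'} := fun n =>
      Nat.rec ⟨(x, y), hx, hy⟩
        (fun _ p => ⟨(Z p.1.1 p.2.1, Z' p.1.2 p.2.2), hZ p.1.1 p.2.1, hZ' p.1.2 p.2.2⟩) n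
    refine ⟨max 1 s₀ + 1, by positivity,
      (fun n => Nat.rec (Classical.arbitrary 𝒜) (fun m _ => A (S m).1.1 (S m).2.1) n),
      (fun n => Nat.rec (Classical.arbitrary 𝒜') (fun m _ => A' (S m).1.2 (S m).2.2) n),
      (fun n => (S n).1.1 - (S n).1.2), rfl, ?_, ?_⟩
    · intro i
      have h1 : (S i).1.1 = ρ * (S (i + 1)).1.1 + e (A (S i).1.1 (S i).2.1) :=
        hEq (S i).1.1 (S i).2.1
      have h2 : (S i).1.2 = ρ * (S (i + 1)).1.2 + e' (A' (S i).1.2 (S i).2.2) :=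
        hEq' (S i).1.2 (S i).2.2
      show (S (i + 1)).1.1 - (S (i + 1)).1.2
          = ρ⁻¹ * (((S i).1.1 - (S i).1.2) + e' (A' (S i).1.2 (S i).2.2)
            - e (A (S i).1.1 (S i).2.1))
      set EA := e (A (S i).1.1 (S i).2.1) with hEA
      set EA' := e' (A' (S i).1.2 (S i).2.2) with hEA'
      rw [h1, h2]
      field_simp
      ring
    · intro i
      have h1 := hKsub (S i).2.1
      have h2 := hK'sub (S i).2.2
      simp only [Set.mem_Icc] at h1 h2
      show |(S i).1.1 - (S i).1.2| < max 1 s₀ + 1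
      rw [abs_lt]
      constructor
      · have := le_max_right 1 s₀
        linarith [h1.1, h2.2]
      · have := le_max_left 1 s₀
        linarith [h1.2, h2.1]
  · rintro ⟨M, hM, a, a', v, hv0, hrec, hbd⟩
    obtain ⟨hsum1, hx⟩ := attractor_aux ρ hρ hρ1 e K hKc hK h0K (fun i => a (i + 1))
    obtain ⟨hsum2, hy⟩ := attractor_aux ρ hρ hρ1 e' K' hK'c hK' h0K' (fun i => a' (i + 1))
    set x := ∑' i, ρ ^ i * e (a (i + 1)) with hxdef
    set y := ∑' i, ρ ^ i * e' (a' (i + 1)) with hydef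
    have hvn : ∀ n, v n = ρ * v (n + 1) + e (a (n + 1)) - e' (a' (n + 1)) := by
      intro n
      have h := hrec n
      rw [renorm] at h
      field_simp at h
      linarith
    have key : ∀ n, u = ρ ^ n * v n
        + ∑ i ∈ Finset.range n, ρ ^ i * (e (a (i + 1)) - e' (a' (i + 1))) := by
      intro n
      induction n with
      | zero => simp [hv0]
      | succ n ih =>
        rw [ih, hvn n, Finset.sum_range_succ]
        ring
    have h1 : Tendsto (fun n => ρ ^ n * v n) atTop (nhds 0) := by
      have hb : ∀ n, ‖ρ ^ n * v n‖ ≤ M * ρ ^ n := by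
        intro n
        rw [Real.norm_eq_abs, abs_mul, abs_pow, abs_of_pos hρ, mul_comm]
        exact mul_le_mul_of_nonneg_right (hbd n).le (pow_nonneg hρ.le n)
      have hg : Tendsto (fun n => M * ρ ^ n) atTop (nhds 0) := by
        simpa using (tendsto_pow_atTop_nhds_zero_of_lt_one hρ.le hρ1).const_mul M
      exact squeeze_zero_norm hb hg
    have h2 : Tendsto
        (fun n => ∑ i ∈ Finset.range n, ρ ^ i * (e (a (i + 1)) - e' (a' (i + 1))))
        atTop (nhds (x - y)) := by
      have := (hsum1.hasSum.sub hsum2.hasSum).tendsto_sum_nat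
      simpa [mul_sub] using this
    have h3 := h1.add h2
    have h4 : Tendsto (fun _ : ℕ => u) atTop (nhds (0 + (x - y))) :=
      h3.congr (fun n => (key n).symm)
    have hu : u = x - y := by
      have := tendsto_nhds_unique h4 tendsto_const_nhds
      linarith
    exact Set.mem_image2.2 ⟨x, hx, y, hy, by rw [hu]⟩
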